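/- Let R be a join-semilattice with at least two elements, let n ≥ 1, let X₁, …, X_{n-1} be nonempty finite types and ε_i a multi-valued selection function on X_i for each i < n. Then ε_i is witnessing for every i < n if and only if for every nonempty finite type Xₙ, every multi-valued selection function εₙ on Xₙ, and every outcome function q : X₁ × ⋯ × Xₙ → R, the set (⨂_{i=1}^n ε_i)(q) is a subset of the set of Σ(G) plays of the game G = (q, (ε₁, …, εₙ)). -/

import Mathlib

universe u

/-- A multi-valued selection function on `X` with outcomes in `R`:
a map `(X → R) → Finset X` whose values are all nonempty. -/
structure Sel (R X : Type u) [SemilatticeSup R] : Type u where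
  fn : (X → R) → Finset X
  ne : ∀ k, (fn k).Nonempty

variable {R : Type u} [SemilatticeSup R]

/-- A selection function is witnessing if whenever `x` is selected in the context
obtained by taking pointwise joins over an indexing function `I`, there is a choice
function `p` for `I` in whose induced context `x` is also selected. -/
def Witnessing {X : Type u} (ε : Sel R X) : Prop :=
  ∀ (I : X → Finset (X → R)) (hI : ∀ x, (I x).Nonempty) (x : X),
    x ∈ ε.fn (fun x' => (I x').sup' (hI x') (fun P => P x')) →
      ∃ p : X → X → R, (∀ x', p x' ∈ I x') ∧ x ∈ ε.fn (fun x' => p x' x')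

/-- A selection function is upwards closed if whenever `x` is selected in the context
induced by a choice function `p` for an indexing function `I`, then `x` is also selected
in the context obtained by taking pointwise joins over `I`. -/
def UpwardsClosed {X : Type u} (ε : Sel R X) : Prop :=
  ∀ (I : X → Finset (X → R)) (hI : ∀ x, (I x).Nonempty) (p : X → X → R),
    (∀ x', p x' ∈ I x') → ∀ x, x ∈ ε.fn (fun x' => p x' x') →
      x ∈ ε.fn (fun x' => (I x').sup' (hI x') (fun P => P x'))

/-- The product of selection functions. -/
def Sel.prod {X Y : Type u} (ε : Sel R X) (δ : Sel R Y) : Sel R (X × Y) where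
  fn q :=
    ((ε.fn (fun x => (δ.fn (fun y => q (x, y))).sup' (δ.ne _) (fun y => q (x, y)))).sigma
      (fun x => δ.fn (fun y => q (x, y)))).map
      ⟨fun p => (p.1, p.2), fun a b h => by
        cases a; cases b
        simp only [Prod.mk.injEq] at h
        obtain ⟨h1, h2⟩ := h
        subst h1; subst h2; rfl⟩
  ne q := by
    obtain ⟨x, hx⟩ := ε.ne (fun x => (δ.fn (fun y => q (x, y))).sup' (δ.ne _) (fun y => q (x, y)))
    obtain ⟨y, hy⟩ := δ.ne (fun y => q (x, y))
    exact ⟨(x, y), Finset.mem_map.2 ⟨⟨x, y⟩, Finset.mem_sigma.mpr ⟨hx, hy⟩, rfl⟩⟩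

/-- A strategy profile `(σ₁, σ₂)` is rational. -/
def IsRational {X Y : Type u} (ε : Sel R X) (δ : Sel R Y) (q : X × Y → R)
    (σ₁ : X) (σ₂ : X → Y) : Prop :=
  (∃ yf : X → Y, (∀ x, yf x ∈ δ.fn (fun y' => q (x, y'))) ∧
      σ₁ ∈ ε.fn (fun x => q (x, yf x))) ∧
  ∀ x, σ₂ x ∈ δ.fn (fun y' => q (x, y'))

/-- The set of rational plays. -/
def RatPlays {X Y : Type u} (ε : Sel R X) (δ : Sel R Y) (q : X × Y → R) : Set (X × Y) :=
  {p | ∃ σ₁ σ₂, IsRational ε δ q σ₁ σ₂ ∧ p = (σ₁, σ₂ σ₁)}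

/-- Subgame perfect strategy profile. -/
def SubgamePerfect {X Y : Type u} (ε : Sel R X) (δ : Sel R Y) (q : X × Y → R)
    (σ₁ : X) (σ₂ : X → Y) : Prop :=
  σ₁ ∈ ε.fn (fun x => q (x, σ₂ x)) ∧ ∀ x, σ₂ x ∈ δ.fn (fun y => q (x, y))

/-- The set of subgame perfect plays. -/
def SPPlays {X Y : Type u} (ε : Sel R X) (δ : Sel R Y) (q : X × Y → R) : Set (X × Y) :=
  {p | ∃ σ₁ σ₂, SubgamePerfect ε δ q σ₁ σ₂ ∧ p = (σ₁, σ₂ σ₁)}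

/-- Transport a selection function along an equivalence of move types. -/
def Sel.comap {X Y : Type u} (ε : Sel R X) (e : X ≃ Y) : Sel R Y where
  fn k := (ε.fn (fun x => k (e x))).map e.toEmbedding
  ne k := (ε.ne _).map

/-- The identification of `X 0` with plays of a one-round game. -/
def oneEquiv (X : Fin 1 → Type u) : X 0 ≃ ∀ i, X i where
  toFun x i := Fin.cases x (fun j => j.elim0) i
  invFun f := f 0
  left_inv x := by simp
  right_inv f := funext fun i => Fin.cases rfl (fun j => j.elim0) i

/-- The `n`-fold product of selection functions, iterating the binary product to the
left: `⨂_{i} ε_i = ε 0 ⊗ (⨂_{i>0} ε_i)`, identifying plays `∀ i, X i` with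
`X 0 × (∀ i, X i.succ)`; the product of a single selection function is itself. -/
def bigProd : {n : ℕ} → {X : Fin (n + 1) → Type u} → (∀ i, Sel R (X i)) →
    Sel R (∀ i, X i)
  | 0, X, ε => (ε 0).comap (oneEquiv X)
  | _ + 1, X, ε => ((ε 0).prod (bigProd (fun i => ε i.succ))).comap (Fin.consEquiv X)

/-- A partial play of length `k` in a game with move types `X`: the moves of all
rounds `j` with `j < k`. -/
def PartialPlay {n : ℕ} (X : Fin n → Type u) (k : ℕ) : Type u :=
  ∀ j : Fin n, (j : ℕ) < k → X j

/-- A strategy for round `i`: a choice of move in `X i` contingent on the moves of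
all previous rounds. -/
def Strat {n : ℕ} (X : Fin n → Type u) (i : Fin n) : Type u :=
  PartialPlay X i → X i

/-- Extending a partial play by one further move. -/
def PartialPlay.snoc {n : ℕ} {X : Fin n → Type u} {i : Fin n}
    (x : PartialPlay X i) (y : X i) : PartialPlay X (i + 1) :=
  fun j hj =>
    if h : (j : ℕ) < i then x j h
    else (Fin.ext (by omega) : i = j) ▸ y

/-- The moves of the first `m` rounds obtained by playing out the strategies `σ`
from the partial play `x` of length `k` onwards. -/
def extPlay {n : ℕ} {X : Fin n → Type u} (σ : ∀ i, Strat X i) (k : ℕ)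
    (x : PartialPlay X k) : (m : ℕ) → PartialPlay X m
  | 0 => fun _ hj => absurd hj (Nat.not_lt_zero _)
  | m + 1 => fun j hj =>
      if hk : (j : ℕ) < k then x j hk
      else if hm : (j : ℕ) < m then extPlay σ k x m j hm
      else σ j (fun j' hj' => extPlay σ k x m j' (by omega))

/-- The strategic extension of a partial play `x` by the strategies `σ` (only the
strategies of rounds `≥ k` are used). -/
def stratExt {n : ℕ} {X : Fin n → Type u} (σ : ∀ i, Strat X i) (k : ℕ)
    (x : PartialPlay X k) : ∀ j, X j :=
  fun j => extPlay σ k x n j j.isLt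

/-- The strategic play of a strategy profile `σ`. -/
def stratPlay {n : ℕ} {X : Fin n → Type u} (σ : ∀ i, Strat X i) : ∀ j, X j :=
  stratExt σ 0 (fun _ hj => absurd hj (Nat.not_lt_zero _))

/-- A (round-indexed) set `Γ` of strategies is consistent for the game with outcome
function `q` and selection functions `ε`: for every round `i`, every `σi ∈ Γ i` and
every partial play `x` of length `i`, there are strategies in `Γ` for the rounds
after `i` such that `σi x` is selected by `ε i` in the context where each possible
next move `y` leads to the outcome of the strategic extension of `(x, y)`. -/
def Consistent {n : ℕ} {X : Fin n → Type u} {R : Type u} [SemilatticeSup R]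
    (q : (∀ i, X i) → R) (ε : ∀ i, Sel R (X i)) (Γ : ∀ i, Set (Strat X i)) : Prop :=
  ∀ (i : Fin n), ∀ σi ∈ Γ i, ∀ x : PartialPlay X i,
    ∃ σ : ∀ j, Strat X j, (∀ j, i < j → σ j ∈ Γ j) ∧
      σi x ∈ (ε i).fn (fun y => q (stratExt σ (i + 1) (x.snoc y)))

/-- The maximal consistent set `Σ(G)` of strategies, defined by downwards recursion
on the round: a round-`i` strategy belongs to `Σ(G)` iff it, together with all the
strategies of `Σ(G)` at later rounds, forms a consistent set. -/
def SigmaG {n : ℕ} {X : Fin n → Type u} {R : Type u} [SemilatticeSup R]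
    (q : (∀ i, X i) → R) (ε : ∀ i, Sel R (X i)) : (i : Fin n) → Set (Strat X i) :=
  fun i =>
    {σi | Consistent q ε (fun j =>
      if h : i = j then {h ▸ σi}
      else if hij : i < j then SigmaG q ε j
      else ∅)}
termination_by i => n - (i : ℕ)
decreasing_by
  have h1 : (i : ℕ) < (j : ℕ) := hij
  have h2 : (j : ℕ) < n := j.isLt
  omega

/-- `x` is a `Σ(G)` play if it is the strategic play of a strategy profile all of
whose strategies lie in `Σ(G)`. -/
def IsSigmaPlay {n : ℕ} {X : Fin n → Type u} {R : Type u} [SemilatticeSup R]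
    (q : (∀ i, X i) → R) (ε : ∀ i, Sel R (X i)) (x : ∀ i, X i) : Prop :=
  ∃ σ : ∀ i, Strat X i, (∀ i, σ i ∈ SigmaG q ε i) ∧ x = stratPlay σ

/-- The family of move types of an `(m+1)`-round game whose first `m` move types are
given by `X` and whose last move type is `Y`. -/
def snocTypes {m : ℕ} (X : Fin m → Type u) (Y : Type u) : Fin (m + 1) → Type u :=
  Fin.snoc (α := fun _ => Type u) X Y

/-- Appending a final-round selection function to a family. -/
def snocSel {R : Type u} [SemilatticeSup R] {m : ℕ} {X : Fin m → Type u} {Y : Type u}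
    (ε : ∀ i, Sel R (X i)) (δ : Sel R Y) :
    ∀ i : Fin (m + 1), Sel R (snocTypes X Y i) :=
  Fin.lastCases
    (cast (by simp [snocTypes]) δ)
    (fun i => cast (by simp [snocTypes]) (ε i))
section Machinery
open Classical
variable {R : Type u} [SemilatticeSup R]

theorem sel_cast_mem {A B : Type u} (h : A = B) (p : Sel R A = Sel R B) (ε : Sel R A)
    (k : B → R) (b : B) :
    b ∈ (cast p ε).fn k ↔ cast h.symm b ∈ ε.fn (fun a => k (cast h a)) := by
  subst h; rfl

theorem witnessing_cast {A B : Type u} (h : A = B) (p : Sel R A = Sel R B) (ε : Sel R A) :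
    Witnessing (cast p ε) ↔ Witnessing ε := by
  subst h; rfl

variable {n : ℕ} {X : Fin n → Type u}

theorem snoc_lt {i : Fin n} (z : PartialPlay X i) (y : X i) {j : Fin n}
    (hj : (j:ℕ) < (i:ℕ)+1) (h : (j:ℕ) < (i:ℕ)) : (z.snoc y) j hj = z j h :=
  dif_pos h

theorem snoc_self {i : Fin n} (z : PartialPlay X i) (y : X i)
    (hj : (i:ℕ) < (i:ℕ)+1) : (z.snoc y) i hj = y := by
  show (if h : (i:ℕ) < (i:ℕ) then z i h else _) = y
  rw [dif_neg (lt_irrefl _)]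

theorem extPlay_lt_k (σ : ∀ i, Strat X i) (k : ℕ) (z : PartialPlay X k) :
    ∀ (m : ℕ) (j : Fin n) (hj : (j:ℕ) < m) (hk : (j:ℕ) < k),
      extPlay σ k z m j hj = z j hk
  | 0, _, hj, _ => absurd hj (Nat.not_lt_zero _)
  | m+1, j, hj, hk => by
      show (if h : (j:ℕ) < k then z j h else _) = z j hk
      rw [dif_pos hk]

theorem extPlay_stable_succ (σ : ∀ i, Strat X i) (k : ℕ) (z : PartialPlay X k)
    (m : ℕ) (j : Fin n) (hj : (j:ℕ) < m+1) (hjm : (j:ℕ) < m) :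
    extPlay σ k z (m+1) j hj = extPlay σ k z m j hjm := by
  by_cases hk : (j:ℕ) < k
  · rw [extPlay_lt_k σ k z (m+1) j hj hk, extPlay_lt_k σ k z m j hjm hk]
  · show (if h : (j:ℕ) < k then z j h else if hm : (j:ℕ) < m then _ else _) = _
    rw [dif_neg hk, dif_pos hjm]

theorem extPlay_stable (σ : ∀ i, Strat X i) (k : ℕ) (z : PartialPlay X k)
    {m m' : ℕ} (hmm : m ≤ m') (j : Fin n) (hj : (j:ℕ) < m) (hj' : (j:ℕ) < m') :
    extPlay σ k z m' j hj' = extPlay σ k z m j hj := by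
  induction m' with
  | zero => exact absurd hj' (Nat.not_lt_zero _)
  | succ m' IH =>
      rcases Nat.eq_or_lt_of_le hmm with h | h
      · subst h; rfl
      · have hm' : (j:ℕ) < m' := lt_of_lt_of_le hj (Nat.lt_succ_iff.mp h)
        rw [extPlay_stable_succ σ k z m' j hj' hm']
        exact IH (Nat.lt_succ_iff.mp h) hm'

theorem extPlay_apply (σ : ∀ i, Strat X i) (k : ℕ) (z : PartialPlay X k)
    {j : Fin n} (hk : k ≤ (j:ℕ)) :
    ∀ (m : ℕ) (hj : (j:ℕ) < m),
      extPlay σ k z m j hj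
        = σ j (fun j' hj' => extPlay σ k z (j:ℕ) j' hj') := by
  intro m
  induction m with
  | zero => intro hj; exact absurd hj (Nat.not_lt_zero _)
  | succ m IH =>
      intro hj
      show (if h : (j:ℕ) < k then z j h else if hm : (j:ℕ) < m then _ else _) = _
      rw [dif_neg (not_lt.mpr hk)]
      by_cases hm : (j:ℕ) < m
      · rw [dif_pos hm]; exact IH hm
      · rw [dif_neg hm]
        have hjm : (j:ℕ) = m := by omega
        subst hjm
        rfl

theorem stratExt_lt (σ : ∀ i, Strat X i) (k : ℕ) (z : PartialPlay X k)
    (j : Fin n) (hk : (j:ℕ) < k) : stratExt σ k z j = z j hk :=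
  extPlay_lt_k σ k z n j j.isLt hk

theorem stratExt_apply (σ : ∀ i, Strat X i) (k : ℕ) (z : PartialPlay X k)
    (j : Fin n) (hk : k ≤ (j:ℕ)) :
    stratExt σ k z j = σ j (fun j' hj' => stratExt σ k z j') := by
  show extPlay σ k z n j j.isLt = _
  rw [extPlay_apply σ k z hk n j.isLt]
  congr 1
  funext j' hj'
  exact (extPlay_stable σ k z (le_of_lt j.isLt) j' hj' (lt_trans hj' j.isLt)).symm

theorem extPlay_snoc (σ : ∀ i, Strat X i) (i : Fin n) (z : PartialPlay X i) :
    ∀ (m : ℕ) (j : Fin n) (hj : (j:ℕ) < m),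
      extPlay σ ((i:ℕ)+1) (z.snoc (σ i z)) m j hj = extPlay σ (i:ℕ) z m j hj := by
  intro m
  induction m with
  | zero => intro j hj; exact absurd hj (Nat.not_lt_zero _)
  | succ m IH =>
      intro j hj
      show (if h : (j:ℕ) < (i:ℕ)+1 then (z.snoc (σ i z)) j h
              else if hm : (j:ℕ) < m then _ else _)
          = (if h : (j:ℕ) < (i:ℕ) then z j h else if hm : (j:ℕ) < m then _ else _)
      by_cases hki : (j:ℕ) < (i:ℕ)
      · rw [dif_pos (by omega : (j:ℕ) < (i:ℕ)+1), dif_pos hki]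
        exact snoc_lt z (σ i z) _ hki
      · rw [dif_neg hki]
        by_cases hje : (j:ℕ) = (i:ℕ)
        · have : j = i := Fin.ext hje
          subst this
          rw [dif_pos (by omega : (j:ℕ) < (j:ℕ)+1), snoc_self z (σ j z) _]
          by_cases hm : (j:ℕ) < m
          · rw [dif_pos hm, extPlay_apply σ (j:ℕ) z (le_refl _) m hm]
            congr 1
            funext j' hj'
            exact (extPlay_lt_k σ (j:ℕ) z (j:ℕ) j' hj' hj').symm
          · rw [dif_neg hm]
            congr 1
            funext j' hj'
            exact (extPlay_lt_k σ (j:ℕ) z m j' (by omega) hj').symm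
        · rw [dif_neg (by omega : ¬ (j:ℕ) < (i:ℕ)+1)]
          by_cases hm : (j:ℕ) < m
          · rw [dif_pos hm, dif_pos hm]; exact IH j hm
          · rw [dif_neg hm, dif_neg hm]
            congr 1
            funext j' hj'
            exact IH j' (by omega)

theorem stratExt_snoc (σ : ∀ i, Strat X i) (i : Fin n) (z : PartialPlay X i) :
    stratExt σ ((i:ℕ)+1) (z.snoc (σ i z)) = stratExt σ (i:ℕ) z := by
  funext j
  exact extPlay_snoc σ i z n j j.isLt

end Machinery
section Slicing
variable {R : Type u} [SemilatticeSup R]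
variable {m : ℕ} {X : Fin (m+2) → Type u}

/-- Prepend a first-round move to a partial play of the tail game. -/
def consPP {k : ℕ} (x₀ : X 0) (w : PartialPlay (fun j : Fin (m+1) => X j.succ) k) :
    PartialPlay X (k+1) :=
  fun j => Fin.cases (motive := fun j => (j:ℕ) < k+1 → X j) (fun _ => x₀)
    (fun j' hj' => w j' (Nat.lt_of_succ_lt_succ hj')) j

/-- Drop the first-round move of a partial play. -/
def tailPP {k : ℕ} (z : PartialPlay X (k+1)) :
    PartialPlay (fun j : Fin (m+1) => X j.succ) k :=
  fun j hj => z j.succ (Nat.succ_lt_succ hj)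

theorem consPP_zero {k : ℕ} (x₀ : X 0) (w : PartialPlay (fun j : Fin (m+1) => X j.succ) k)
    (hj : ((0 : Fin (m+2)):ℕ) < k+1) : consPP x₀ w 0 hj = x₀ := by
  show Fin.cases (motive := fun j => (j:ℕ) < k+1 → X j) _ _ (0 : Fin (m+2)) hj = x₀
  rw [Fin.cases_zero]

theorem consPP_succ {k : ℕ} (x₀ : X 0) (w : PartialPlay (fun j : Fin (m+1) => X j.succ) k)
    (j' : Fin (m+1)) (hj' : ((j'.succ : Fin (m+2)):ℕ) < k+1) :
    consPP x₀ w j'.succ hj' = w j' (Nat.lt_of_succ_lt_succ hj') := by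
  show Fin.cases (motive := fun j => (j:ℕ) < k+1 → X j) _ _ (j'.succ) hj' = _
  rw [Fin.cases_succ]

theorem tailPP_consPP {k : ℕ} (x₀ : X 0) (w : PartialPlay (fun j : Fin (m+1) => X j.succ) k) :
    tailPP (consPP x₀ w) = w := by
  funext j' hj'
  exact consPP_succ x₀ w j' _

theorem consPP_tailPP {k : ℕ} (z : PartialPlay X (k+1))
    (h0 : ((0 : Fin (m+2)):ℕ) < k+1) : consPP (z 0 h0) (tailPP z) = z := by
  funext j hj
  revert hj
  induction j using Fin.cases with
  | zero => intro hj; exact consPP_zero _ _ _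
  | succ j' => intro hj; exact consPP_succ _ _ j' hj

theorem tailPP_snoc (i : Fin (m+1)) (z : PartialPlay X ((i:ℕ)+1)) (y : X i.succ) :
    tailPP (PartialPlay.snoc (i := i.succ) z y)
      = PartialPlay.snoc (i := i) (tailPP z) y := by
  funext j' hj'
  by_cases h : (j':ℕ) < (i:ℕ)
  · show (PartialPlay.snoc (i := i.succ) z y) j'.succ _ = _
    rw [snoc_lt z y (Nat.succ_lt_succ (Nat.lt_succ_of_lt h)) (Nat.succ_lt_succ h),
      snoc_lt (tailPP z) y hj' h]
    rfl
  · have hj'' : (j':ℕ) < (i:ℕ)+1 := hj'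
    have : j' = i := Fin.ext (by omega)
    subst this
    show (PartialPlay.snoc (i := j'.succ) z y) j'.succ _ = _
    rw [snoc_self z y, snoc_self (tailPP z) y]

/-- The key computation: if the strategies of `σ` at the later rounds slice (at first
move `x₀`) to the tail strategies `τ`, then strategic extensions of partial plays
starting with `x₀` decompose accordingly. -/
theorem extPlay_cons (σ : ∀ i, Strat X i) (τ : ∀ j : Fin (m+1), Strat (fun j : Fin (m+1) => X j.succ) j)
    (x₀ : X 0)
    (hστ : ∀ (l : Fin (m+1)) (w : PartialPlay (fun j : Fin (m+1) => X j.succ) (l:ℕ)),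
      σ l.succ (consPP x₀ w) = τ l w)
    (k : ℕ) (z : PartialPlay X (k+1)) (hz : ∀ h, z 0 h = x₀) :
    ∀ (m' : ℕ) (j : Fin (m+1)) (hjs : ((j.succ : Fin (m+2)):ℕ) < m'+1) (hj : (j:ℕ) < m'),
      extPlay σ (k+1) z (m'+1) j.succ hjs = extPlay τ k (tailPP z) m' j hj := by
  intro m'
  induction m' with
  | zero => intro j hjs hj; exact absurd hj (Nat.not_lt_zero _)
  | succ m'' IH =>
      intro j hjs hj
      show (if h : ((j.succ : Fin (m+2)):ℕ) < k+1 then z j.succ h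
              else if hm : ((j.succ : Fin (m+2)):ℕ) < m''+1 then _ else _)
          = (if h : (j:ℕ) < k then tailPP z j h
              else if hm : (j:ℕ) < m'' then _ else _)
      by_cases hk : (j:ℕ) < k
      · rw [dif_pos (show ((j.succ : Fin (m+2)):ℕ) < k+1 from Nat.succ_lt_succ hk), dif_pos hk]
        rfl
      · rw [dif_neg (show ¬ ((j.succ : Fin (m+2)):ℕ) < k+1 from fun hh => hk (Nat.lt_of_succ_lt_succ hh)), dif_neg hk]
        by_cases hm : (j:ℕ) < m''
        · rw [dif_pos (show ((j.succ : Fin (m+2)):ℕ) < m''+1 from Nat.succ_lt_succ hm), dif_pos hm]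
          exact IH j _ hm
        · rw [dif_neg (show ¬ ((j.succ : Fin (m+2)):ℕ) < m''+1 from fun hh => hm (Nat.lt_of_succ_lt_succ hh)), dif_neg hm]
          rw [← hστ j (fun j₂ hj₂ => extPlay τ k (tailPP z) m'' j₂ (by omega))]
          congr 1
          funext j₂ hj₂
          revert hj₂
          induction j₂ using Fin.cases with
          | zero =>
              intro hj₂
              exact (extPlay_lt_k σ (k+1) z (m''+1) 0
                  (show ((0 : Fin (m+2)):ℕ) < m''+1 from Nat.succ_pos m'')
                  (show ((0 : Fin (m+2)):ℕ) < k+1 from Nat.succ_pos k)).trans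
                ((hz _).trans (consPP_zero _ _ _).symm)
          | succ j₃ =>
              intro hj₂
              have h1 : (j₃:ℕ)+1 < (j:ℕ)+1 := hj₂
              exact (IH j₃ (by omega) (by omega)).trans (consPP_succ x₀ (fun j₂ hj₂ => extPlay τ k (tailPP z) m'' j₂ (by omega)) j₃ hj₂).symm
  
theorem stratExt_cons (σ : ∀ i, Strat X i)
    (τ : ∀ j : Fin (m+1), Strat (fun j : Fin (m+1) => X j.succ) j) (x₀ : X 0)
    (hστ : ∀ (l : Fin (m+1)) (w : PartialPlay (fun j : Fin (m+1) => X j.succ) (l:ℕ)),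
      σ l.succ (consPP x₀ w) = τ l w)
    (k : ℕ) (z : PartialPlay X (k+1)) (hz : ∀ h, z 0 h = x₀) :
    stratExt σ (k+1) z = Fin.cons x₀ (stratExt τ k (tailPP z)) := by
  funext i
  induction i using Fin.cases with
  | zero => rw [stratExt_lt σ (k+1) z 0 (by simp)]; exact hz _
  | succ j => exact extPlay_cons σ τ x₀ hστ k z hz (m+1) j _ j.isLt

end Slicing
section SigmaLemmas
variable {R : Type u} [SemilatticeSup R]
variable {n : ℕ} {X : Fin n → Type u}

theorem sigmaG_forward (q : (∀ i, X i) → R) (ε : ∀ i, Sel R (X i)) {i : Fin n}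
    {σi : Strat X i} (h : σi ∈ SigmaG q ε i) :
    ∀ x : PartialPlay X i, ∃ σ : ∀ j, Strat X j,
      (∀ j, i < j → σ j ∈ SigmaG q ε j) ∧
      σi x ∈ (ε i).fn (fun y => q (stratExt σ ((i:ℕ)+1) (x.snoc y))) := by
  rw [SigmaG] at h
  intro x
  obtain ⟨σ, hσ, hmem⟩ := h i σi (by beta_reduce; rw [dif_pos rfl]; exact rfl) x
  refine ⟨σ, fun j hij => ?_, hmem⟩
  have := hσ j hij
  beta_reduce at this
  rwa [dif_neg (ne_of_lt hij), dif_pos hij] at this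

theorem sigmaG_mem_iff (q : (∀ i, X i) → R) (ε : ∀ i, Sel R (X i)) {i : Fin n}
    {σi : Strat X i} :
    σi ∈ SigmaG q ε i ↔
      ∀ x : PartialPlay X i, ∃ σ : ∀ j, Strat X j,
        (∀ j, i < j → σ j ∈ SigmaG q ε j) ∧
        σi x ∈ (ε i).fn (fun y => q (stratExt σ ((i:ℕ)+1) (x.snoc y))) := by
  constructor
  · exact sigmaG_forward q ε
  · intro hAll
    rw [SigmaG]
    intro i' σ' hσ' x
    by_cases h : i = i'
    · subst h
      beta_reduce at hσ'
      rw [dif_pos rfl] at hσ'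
      have hσi : σ' = σi := hσ'
      subst hσi
      obtain ⟨σ, hj, hm⟩ := hAll x
      exact ⟨σ, fun j hij => by beta_reduce; rw [dif_neg (ne_of_lt hij), dif_pos hij]; exact hj j hij, hm⟩
    · beta_reduce at hσ'
      rw [dif_neg h] at hσ'
      by_cases h2 : i < i'
      · rw [dif_pos h2] at hσ'
        obtain ⟨σ, hj, hm⟩ := sigmaG_forward q ε hσ' x
        refine ⟨σ, fun j hij => ?_, hm⟩
        beta_reduce
        rw [dif_neg (ne_of_lt (lt_trans h2 hij)), dif_pos (lt_trans h2 hij)]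
        exact hj j hij
      · rw [dif_neg h2] at hσ'
        exact absurd hσ' (Set.notMem_empty _)

theorem sigmaG_nonempty (q : (∀ i, X i) → R) (ε : ∀ i, Sel R (X i))
    (ne : ∀ j, Nonempty (X j)) (i : Fin n) : ∃ σi, σi ∈ SigmaG q ε i := by
  have key : ∀ d : ℕ, ∀ i : Fin n, n - (i:ℕ) ≤ d → ∃ σi, σi ∈ SigmaG q ε i := by
    intro d
    induction d with
    | zero => intro i hi; exact absurd hi (by have := i.isLt; omega)
    | succ d IH =>
        intro i hi
        have hch : ∀ j : Fin n, i < j → ∃ σj, σj ∈ SigmaG q ε j := by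
          intro j hij
          exact IH j (by have h1 : (i:ℕ) < (j:ℕ) := hij; omega)
        classical
        refine ⟨fun x => ((ε i).ne (fun y => q (stratExt
          (fun j => if h : i < j then (hch j h).choose else fun _ => Classical.choice (ne j))
          ((i:ℕ)+1) (x.snoc y)))).choose, ?_⟩
        apply (sigmaG_mem_iff q ε).mpr
        intro x
        refine ⟨_, fun j hij => ?_, ((ε i).ne _).choose_spec⟩
        convert (hch j hij).choose_spec using 1
        exact dif_pos hij
  exact key n i (by omega)

end SigmaLemmas
section SliceSigma
open Classical
variable {R : Type u} [SemilatticeSup R]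
variable {m : ℕ} {X : Fin (m+2) → Type u}

theorem slice_mem_sigmaG (q : (∀ i, X i) → R) (ε : ∀ i, Sel R (X i))
    (ne : ∀ j, Nonempty (X j)) :
    ∀ (j : Fin (m+1)) (σ' : Strat X j.succ),
      (∀ x₀ : X 0, (fun w => σ' (consPP x₀ w)) ∈
        SigmaG (fun xs => q (Fin.cons x₀ xs)) (fun l => ε l.succ) j) →
      σ' ∈ SigmaG q ε j.succ := by
  have net : ∀ l : Fin (m+1), Nonempty ((fun l : Fin (m+1) => X l.succ) l) :=
    fun l => ne l.succ
  have key : ∀ d : ℕ, ∀ (j : Fin (m+1)), (m+1) - (j:ℕ) ≤ d →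
      ∀ (σ' : Strat X j.succ),
      (∀ x₀ : X 0, (fun w => σ' (consPP x₀ w)) ∈
        SigmaG (fun xs => q (Fin.cons x₀ xs)) (fun l => ε l.succ) j) →
      σ' ∈ SigmaG q ε j.succ := by
    intro d
    induction d with
    | zero => intro j hj; exact absurd hj (by have := j.isLt; omega)
    | succ d IH =>
        intro j hjd σ' hsl
        rw [sigmaG_mem_iff]
        intro z
        have h0 : ((0 : Fin (m+2)):ℕ) < (j:ℕ)+1 := Nat.succ_pos _
        set x₀ := z 0 h0 with hx₀
        obtain ⟨τ, hτ, hmem⟩ := sigmaG_forward _ _ (hsl x₀) (tailPP z)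
        -- assemble full strategies for the later rounds
        set σf : ∀ l : Fin (m+2), Strat X l := fun l =>
          Fin.cases (motive := fun l => Strat X l) (fun _ => x₀)
            (fun l' w =>
              if (w 0 (Nat.succ_pos _)) = x₀ then τ l' (tailPP w)
              else (sigmaG_nonempty (fun xs => q (Fin.cons (w 0 (Nat.succ_pos _)) xs))
                (fun l => ε l.succ) net l').choose (tailPP w)) l with hσf
        have hslice : ∀ (x₀' : X 0) (l' : Fin (m+1))
            (w : PartialPlay (fun l : Fin (m+1) => X l.succ) (l':ℕ)),
            σf l'.succ (consPP x₀' w)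
              = if x₀' = x₀ then τ l' w
                else (sigmaG_nonempty (fun xs => q (Fin.cons x₀' xs))
                  (fun l => ε l.succ) net l').choose w := by
          intro x₀' l' w
          rw [hσf]
          show (fun w => if (w 0 (Nat.succ_pos _)) = x₀ then τ l' (tailPP w)
              else (sigmaG_nonempty (fun xs => q (Fin.cons (w 0 (Nat.succ_pos _)) xs))
                (fun l => ε l.succ) net l').choose (tailPP w)) (consPP x₀' w) = _
          beta_reduce
          rw [consPP_zero x₀' w (Nat.succ_pos _), tailPP_consPP]
        have hmemf : ∀ l : Fin (m+2), j.succ < l → σf l ∈ SigmaG q ε l := by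
          intro l hl
          induction l using Fin.cases with
          | zero =>
              exact absurd (show ((j.succ : Fin (m+2)):ℕ) < 0 from hl) (Nat.not_lt_zero _)
          | succ l' =>
              have hjl : (j:ℕ)+1 < (l':ℕ)+1 := hl
              have hl'm := l'.isLt
              have hjm := j.isLt
              apply IH l' (by omega)
              intro x₀'
              have : (fun w => σf l'.succ (consPP x₀' w))
                  = if x₀' = x₀ then τ l'
                    else (sigmaG_nonempty (fun xs => q (Fin.cons x₀' xs))
                      (fun l => ε l.succ) net l').choose := by
                funext w
                rw [hslice x₀' l' w]
                split <;> rfl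
              rw [this]
              split
              · next hx => subst hx; exact hτ l' (Fin.lt_def.mpr (by omega))
              · exact (sigmaG_nonempty _ _ net l').choose_spec
        refine ⟨σf, hmemf, ?_⟩
        have hctx : (fun y => q (stratExt σf (((j.succ : Fin (m+2)):ℕ)+1) (z.snoc y)))
            = fun y => (fun xs => q (Fin.cons x₀ xs))
                (stratExt τ ((j:ℕ)+1) ((tailPP z).snoc y)) := by
          funext y
          have hz' : ∀ h, (PartialPlay.snoc (i := j.succ) z y) 0 h = x₀ :=
            fun h => snoc_lt z y h h0
          have e1 := stratExt_cons σf τ x₀ (fun l w => by rw [hslice x₀ l w, if_pos rfl])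
              ((j:ℕ)+1) (z.snoc y) hz'
          rw [tailPP_snoc j z y] at e1
          exact congrArg q e1
        rw [hctx]
        have : σ' z = σ' (consPP x₀ (tailPP z)) := by rw [consPP_tailPP z h0]
        rw [this]
        exact hmem
  exact fun j => key (m+1) j (by omega)

end SliceSigma
section BigProd
open Classical
variable {R : Type u} [SemilatticeSup R]

theorem mem_bigProd_one {X : Fin 1 → Type u} (ε : ∀ i, Sel R (X i))
    (q : (∀ i, X i) → R) (x : ∀ i, X i) :
    x ∈ (bigProd ε).fn q ↔
      ∃ a, a ∈ (ε 0).fn (fun y => q (oneEquiv X y)) ∧ oneEquiv X a = x := by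
  show x ∈ (((ε 0).comap (oneEquiv X)).fn q) ↔ _
  constructor
  · intro hx
    obtain ⟨a, ha, hax⟩ := Finset.mem_map.mp hx
    exact ⟨a, ha, hax⟩
  · rintro ⟨a, ha, hax⟩
    exact Finset.mem_map.mpr ⟨a, ha, hax⟩

theorem mem_bigProd_succ {m : ℕ} {X : Fin (m+2) → Type u} (ε : ∀ i, Sel R (X i))
    (q : (∀ i, X i) → R) (x : ∀ i, X i) :
    x ∈ (bigProd ε).fn q ↔
      ∃ (a : X 0) (b : ∀ j : Fin (m+1), X j.succ),
        a ∈ (ε 0).fn (fun a' =>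
          ((bigProd (fun l => ε l.succ)).fn (fun ys => q (Fin.cons a' ys))).sup'
            ((bigProd (fun l => ε l.succ)).ne _) (fun ys => q (Fin.cons a' ys))) ∧
        b ∈ (bigProd (fun l => ε l.succ)).fn (fun ys => q (Fin.cons a ys)) ∧
        Fin.cons a b = x := by
  show x ∈ ((((ε 0).prod (bigProd (fun l => ε l.succ))).comap (Fin.consEquiv X)).fn q) ↔ _
  constructor
  · intro hx
    obtain ⟨p, hp, hpx⟩ := Finset.mem_map.mp hx
    obtain ⟨s, hs, hsp⟩ := Finset.mem_map.mp hp
    rw [Finset.mem_sigma] at hs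
    refine ⟨s.1, s.2, hs.1, hs.2, ?_⟩
    have h1 : (Fin.consEquiv X) (s.1, s.2) = Fin.cons s.1 s.2 := rfl
    rw [← h1, show ((s.1 : X 0), (s.2 : ∀ j : Fin (m+1), X j.succ)) = p from hsp]
    exact hpx
  · rintro ⟨a, b, ha, hb, hab⟩
    exact Finset.mem_map.mpr ⟨(a, b),
      Finset.mem_map.mpr ⟨⟨a, b⟩, Finset.mem_sigma.mpr ⟨ha, hb⟩, rfl⟩, hab⟩

theorem exists_bigProd_last :
    ∀ (n : ℕ) (X : Fin (n+1) → Type u) (ε : ∀ j, Sel R (X j)),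
      (∀ (k : X (Fin.last n) → R) (y : X (Fin.last n)), y ∈ (ε (Fin.last n)).fn k) →
      ∀ (q : (∀ i, X i) → R) (y : X (Fin.last n)),
        ∃ z, z ∈ (bigProd ε).fn q ∧ z (Fin.last n) = y := by
  intro n
  induction n with
  | zero =>
      intro X ε hδ q y
      refine ⟨oneEquiv X y, (mem_bigProd_one ε q _).mpr ⟨y, hδ _ y, rfl⟩, rfl⟩
  | succ n IH =>
      intro X ε hδ q y
      have hδt : ∀ (k : X ((Fin.last n).succ) → R) (y' : X ((Fin.last n).succ)),
          y' ∈ (ε ((Fin.last n).succ)).fn k := fun k y' => hδ k y'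
      obtain ⟨a, ha⟩ := (ε 0).ne (fun a' =>
        ((bigProd (fun l => ε l.succ)).fn (fun ys => q (Fin.cons a' ys))).sup'
          ((bigProd (fun l => ε l.succ)).ne _) (fun ys => q (Fin.cons a' ys)))
      obtain ⟨zs, hzs, hlast⟩ := IH (fun j => X j.succ) (fun l => ε l.succ) hδt
        (fun ys => q (Fin.cons a ys)) y
      exact ⟨Fin.cons a zs, (mem_bigProd_succ ε q _).mpr ⟨a, zs, ha, hzs, rfl⟩, hlast⟩

theorem exists_bigProd_at :
    ∀ (n : ℕ) (X : Fin (n+1) → Type u) (ε : ∀ j, Sel R (X j))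
      (i : Fin (n+1)), (i:ℕ) < n →
      ∀ (f : X i → X (Fin.last n) → R)
        (q : (∀ j, X j) → R), (∀ z, q z = f (z i) (z (Fin.last n))) →
      (∀ (k : X (Fin.last n) → R) y, y ∈ (ε (Fin.last n)).fn k) →
      ∀ (C : X i → R),
      (∀ (x' : X i) (s : Finset (X (Fin.last n))) (hs : s.Nonempty),
        (∀ y, y ∈ s) → s.sup' hs (f x') = C x') →
      ∀ (x : X i), x ∈ (ε i).fn C →
      ∃ z, z ∈ (bigProd ε).fn q ∧ z i = x := by
  intro n
  induction n with
  | zero => intro X ε i hi; exact absurd hi (by omega)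
  | succ n IH =>
      intro X ε i hi f q hq hδ C hC x hx
      have hδt : ∀ (k : X ((Fin.last n).succ) → R) (y' : X ((Fin.last n).succ)),
          y' ∈ (ε ((Fin.last n).succ)).fn k := fun k y' => hδ k y'
      rcases Fin.eq_zero_or_eq_succ i with hz | ⟨j, hj⟩
      · subst hz
        have hK : ∀ a' : X 0,
            ((bigProd (fun l => ε l.succ)).fn (fun ys => q (Fin.cons a' ys))).sup'
              ((bigProd (fun l => ε l.succ)).ne _) (fun ys => q (Fin.cons a' ys)) = C a' := by
          intro a'
          have hint : ∀ ys : ∀ j : Fin (n+1), X j.succ,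
              q (Fin.cons a' ys) = f a' (ys (Fin.last n)) := by
            intro ys; rw [hq]; rfl
          rw [Finset.sup'_congr _ rfl (fun ys _ => hint ys)]
          rw [show (fun ys : ∀ j : Fin (n+1), X j.succ => f a' (ys (Fin.last n)))
            = (f a' ∘ fun ys : ∀ j : Fin (n+1), X j.succ => ys (Fin.last n)) from rfl]
          rw [← Finset.sup'_image (f := fun ys : ∀ j : Fin (n+1), X j.succ => ys (Fin.last n))
            (g := f a') (s := (bigProd (fun l => ε l.succ)).fn (fun ys => q (Fin.cons a' ys)))]
          · apply hC
            intro y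
            rw [Finset.mem_image]
            obtain ⟨zs, hzs, hlast⟩ := exists_bigProd_last n (fun j => X j.succ)
              (fun l => ε l.succ) hδt (fun ys => q (Fin.cons a' ys)) y
            exact ⟨zs, hzs, hlast⟩
          · exact Finset.Nonempty.image ((bigProd (fun l => ε l.succ)).ne _) _
        have hxK : x ∈ (ε 0).fn (fun a' =>
            ((bigProd (fun l => ε l.succ)).fn (fun ys => q (Fin.cons a' ys))).sup'
              ((bigProd (fun l => ε l.succ)).ne _) (fun ys => q (Fin.cons a' ys))) := by
          rw [show (fun a' : X 0 =>
            ((bigProd (fun l => ε l.succ)).fn (fun ys => q (Fin.cons a' ys))).sup'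
              ((bigProd (fun l => ε l.succ)).ne _) (fun ys => q (Fin.cons a' ys))) = C
            from funext hK]
          exact hx
        obtain ⟨zs, hzs⟩ := (bigProd (fun l => ε l.succ)).ne (fun ys => q (Fin.cons x ys))
        exact ⟨Fin.cons x zs, (mem_bigProd_succ ε q _).mpr ⟨x, zs, hxK, hzs, rfl⟩, rfl⟩
      · subst hj
        obtain ⟨a, ha⟩ := (ε 0).ne (fun a' =>
          ((bigProd (fun l => ε l.succ)).fn (fun ys => q (Fin.cons a' ys))).sup'
            ((bigProd (fun l => ε l.succ)).ne _) (fun ys => q (Fin.cons a' ys)))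
        obtain ⟨zs, hzs, hzsj⟩ := IH (fun j => X j.succ) (fun l => ε l.succ) j
          (by have : ((j.succ : Fin (n+2)):ℕ) = (j:ℕ)+1 := rfl; omega)
          f (fun ys => q (Fin.cons a ys))
          (fun ys => by show q (Fin.cons a ys) = f (ys j) (ys (Fin.last n)); rw [hq]; rfl) hδt C hC x hx
        exact ⟨Fin.cons a zs, (mem_bigProd_succ ε q _).mpr ⟨a, zs, ha, hzs, rfl⟩, hzsj⟩

end BigProd
section Forward
open Classical
variable {R : Type u} [SemilatticeSup R]

theorem bigProd_subset_sigmaPlays :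
    ∀ (n : ℕ) (X : Fin (n+1) → Type u), (∀ j, Nonempty (X j)) →
      ∀ (ε : ∀ j, Sel R (X j)),
      (∀ j : Fin (n+1), (j:ℕ) < n → Witnessing (ε j)) →
      ∀ (q : (∀ i, X i) → R) (x : ∀ i, X i),
        x ∈ (bigProd ε).fn q → IsSigmaPlay q ε x := by
  intro n
  induction n with
  | zero =>
      intro X ne ε _ q x hx
      obtain ⟨a, ha, hax⟩ := (mem_bigProd_one ε q x).mp hx
      refine ⟨fun i => Fin.cases (motive := fun i => Strat X i) (fun _ => a)
        (fun j => j.elim0) i, ?_, ?_⟩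
      · intro i
        induction i using Fin.cases with
        | succ j => exact j.elim0
        | zero =>
            rw [sigmaG_mem_iff]
            intro z
            refine ⟨fun i => Fin.cases (motive := fun i => Strat X i) (fun _ => a)
              (fun j => j.elim0) i, fun j hj => ?_, ?_⟩
            · exact absurd (show ((0 : Fin 1):ℕ) < (j:ℕ) from hj)
                (by have := j.isLt; omega)
            · have hctx : (fun y : X 0 => q (stratExt (fun i => Fin.cases
                  (motive := fun i => Strat X i) (fun _ => a) (fun j => j.elim0) i)
                  (((0 : Fin 1):ℕ)+1) (PartialPlay.snoc z y)))
                  = fun y => q (oneEquiv X y) := by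
                funext y
                congr 1
                funext i
                have hi0 : i = 0 := Fin.fin_one_eq_zero i
                subst hi0
                rw [stratExt_lt _ _ _ 0 (Nat.lt_succ_self _), snoc_self z y]
                rfl
              rw [hctx]
              exact ha
      · rw [← hax]
        funext i
        have hi0 : i = 0 := Fin.fin_one_eq_zero i
        subst hi0
        exact (stratExt_apply (fun i => Fin.cases (motive := fun i => Strat X i)
          (fun _ => a) (fun j => j.elim0) i) 0
          (fun _ hj => absurd hj (Nat.not_lt_zero _)) 0 (Nat.zero_le _)).symm
  | succ n IH =>
      intro X ne ε hW q x hx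
      obtain ⟨a, b, ha, hb, hab⟩ := (mem_bigProd_succ ε q x).mp hx
      -- witnessing at round 0
      set S : X 0 → Finset (∀ j : Fin (n+1), X j.succ) :=
        fun a' => (bigProd (fun l => ε l.succ)).fn (fun ys => q (Fin.cons a' ys)) with hS
      set I₀ : X 0 → Finset (X 0 → R) :=
        fun a' => (S a').image (fun ys => fun a'' => q (Fin.cons a'' ys)) with hI₀
      have hI₀ne : ∀ a', (I₀ a').Nonempty :=
        fun a' => Finset.Nonempty.image ((bigProd _).ne _) _
      have ha' : a ∈ (ε 0).fn (fun a' => (I₀ a').sup' (hI₀ne a') (fun P => P a')) := by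
        have hsup : ∀ a' : X 0, (I₀ a').sup' (hI₀ne a') (fun P => P a')
            = (S a').sup' ((bigProd (fun l => ε l.succ)).ne _)
              (fun ys => q (Fin.cons a' ys)) := by
          intro a'
          exact Finset.sup'_image _ _
        rw [show (fun a' : X 0 => (I₀ a').sup' (hI₀ne a') (fun P => P a'))
          = (fun a' : X 0 => (S a').sup' ((bigProd (fun l => ε l.succ)).ne _)
              (fun ys => q (Fin.cons a' ys))) from funext hsup]
        exact ha
      obtain ⟨p, hp, hpm⟩ := hW 0 (Nat.succ_pos n) I₀ hI₀ne a ha'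
      have hTex : ∀ a', ∃ ys, ys ∈ S a' ∧ (fun a'' => q (Fin.cons a'' ys)) = p a' := by
        intro a'
        have := hp a'
        rw [hI₀] at this
        beta_reduce at this
        rw [Finset.mem_image] at this
        obtain ⟨ys, h1, h2⟩ := this
        exact ⟨ys, h1, h2⟩
      choose T hT1 hT2 using hTex
      have hamem : a ∈ (ε 0).fn (fun a' => q (Fin.cons a' (T a'))) := by
        rw [show (fun a' : X 0 => q (Fin.cons a' (T a'))) = (fun a' => p a' a') from
          funext fun a' => by rw [← hT2 a']]
        exact hpm
      -- IH strategies
      have hWt : ∀ j : Fin (n+1), (j:ℕ) < n → Witnessing ((fun l : Fin (n+1) => ε l.succ) j) :=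
        fun j hj => hW j.succ (by have h1 : ((j.succ : Fin (n+2)):ℕ) = (j:ℕ)+1 := rfl; omega)
      have net : ∀ l : Fin (n+1), Nonempty ((fun l : Fin (n+1) => X l.succ) l) :=
        fun l => ne l.succ
      have hplayT : ∀ a', IsSigmaPlay (fun ys => q (Fin.cons a' ys)) (fun l => ε l.succ) (T a') :=
        fun a' => IH (fun j => X j.succ) net (fun l => ε l.succ) hWt _ (T a') (hT1 a')
      obtain ⟨σB, hσB, hBplay⟩ := IH (fun j => X j.succ) net (fun l => ε l.succ) hWt
        (fun ys => q (Fin.cons a ys)) b hb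
      choose σT hσT hTplay using hplayT
      -- assemble the full profile
      set σ : ∀ l : Fin (n+2), Strat X l := fun l =>
        Fin.cases (motive := fun l => Strat X l) (fun _ => a)
          (fun l' w => if w 0 (Nat.succ_pos _) = a then σB l' (tailPP w)
            else σT (w 0 (Nat.succ_pos _)) l' (tailPP w)) l with hσdef
      have hslice : ∀ (a' : X 0) (l' : Fin (n+1)) (w : PartialPlay (fun l : Fin (n+1) => X l.succ) (l':ℕ)),
          σ l'.succ (consPP a' w) = if a' = a then σB l' w else σT a' l' w := by
        intro a' l' w
        rw [hσdef]
        show (fun w => if w 0 (Nat.succ_pos _) = a then σB l' (tailPP w)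
          else σT (w 0 (Nat.succ_pos _)) l' (tailPP w)) (consPP a' w) = _
        beta_reduce
        rw [consPP_zero a' w (Nat.succ_pos _), tailPP_consPP]
      have hmemsucc : ∀ l' : Fin (n+1), σ l'.succ ∈ SigmaG q ε l'.succ := by
        intro l'
        apply slice_mem_sigmaG q ε ne l'
        intro a'
        have heq : (fun w => σ l'.succ (consPP a' w))
            = if a' = a then σB l' else σT a' l' := by
          funext w
          rw [hslice a' l' w]
          split <;> rfl
        rw [heq]
        split
        · next h => subst h; exact hσB l'
        · exact hσT a' l'
      -- the auxiliary profile for round-0 membership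
      set σ' : ∀ l : Fin (n+2), Strat X l := fun l =>
        Fin.cases (motive := fun l => Strat X l) (fun _ => a)
          (fun l' w => σT (w 0 (Nat.succ_pos _)) l' (tailPP w)) l with hσ'def
      have hslice' : ∀ (a' : X 0) (l' : Fin (n+1)) (w : PartialPlay (fun l : Fin (n+1) => X l.succ) (l':ℕ)),
          σ' l'.succ (consPP a' w) = σT a' l' w := by
        intro a' l' w
        rw [hσ'def]
        show (fun w => σT (w 0 (Nat.succ_pos _)) l' (tailPP w)) (consPP a' w) = _
        beta_reduce
        rw [consPP_zero a' w (Nat.succ_pos _), tailPP_consPP]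
      have hmem0 : σ 0 ∈ SigmaG q ε 0 := by
        rw [sigmaG_mem_iff]
        intro z
        refine ⟨σ', fun l hl => ?_, ?_⟩
        · induction l using Fin.cases with
          | zero => exact absurd (show ((0 : Fin (n+2)):ℕ) < 0 from hl) (Nat.not_lt_zero _)
          | succ l' =>
              apply slice_mem_sigmaG q ε ne l'
              intro a'
              rw [show (fun w => σ' l'.succ (consPP a' w)) = σT a' l' from
                funext fun w => hslice' a' l' w]
              exact hσT a' l'
        · have h0z : ∀ w : PartialPlay X ((0 : Fin (n+2)):ℕ), σ 0 w = a := by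
            intro w; rw [hσdef]; rfl
          have hctx : (fun y : X 0 => q (stratExt σ' (((0 : Fin (n+2)):ℕ)+1)
              (PartialPlay.snoc z y))) = fun y => q (Fin.cons y (T y)) := by
            funext y
            show q (stratExt σ' (0+1) (PartialPlay.snoc z y)) = _
            have hz' : ∀ h, (PartialPlay.snoc z y) 0 h = y := fun h => snoc_self z y h
            have e1 := stratExt_cons σ' (σT y) y (fun l w => hslice' y l w) 0
              (PartialPlay.snoc z y) hz'
            rw [e1]
            have hemp : tailPP (PartialPlay.snoc z y)
                = (fun _ hj => absurd hj (Nat.not_lt_zero _)) := by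
              funext j hj
              exact absurd hj (Nat.not_lt_zero _)
            exact congrArg (fun t => q (Fin.cons y t))
              ((congrArg (stratExt (σT y) 0) hemp).trans (hTplay y).symm)
          rw [hctx, h0z z]
          exact hamem
      refine ⟨σ, ?_, ?_⟩
      · intro l
        induction l using Fin.cases with
        | zero => exact hmem0
        | succ l' => exact hmemsucc l'
      · rw [← hab]
        have h0E : σ 0 (fun _ hj => absurd hj (Nat.not_lt_zero _)) = a := by
          rw [hσdef]; rfl
        have e0 : stratPlay σ = stratExt σ (0+1)
            (PartialPlay.snoc (i := (0 : Fin (n+2)))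
              (fun _ hj => absurd hj (Nat.not_lt_zero _))
              (σ 0 (fun _ hj => absurd hj (Nat.not_lt_zero _)))) :=
          (stratExt_snoc σ 0 (fun _ hj => absurd hj (Nat.not_lt_zero _))).symm
        have hz' : ∀ h, (PartialPlay.snoc (i := (0 : Fin (n+2)))
            (fun _ hj => absurd hj (Nat.not_lt_zero _))
            (σ 0 (fun _ hj => absurd hj (Nat.not_lt_zero _)))) 0 h = a :=
          fun h => (snoc_self _ _ h).trans h0E
        have e1 := stratExt_cons σ σB a (fun l w => by rw [hslice a l w, if_pos rfl]) 0
          (PartialPlay.snoc (i := (0 : Fin (n+2)))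
            (fun _ hj => absurd hj (Nat.not_lt_zero _))
            (σ 0 (fun _ hj => absurd hj (Nat.not_lt_zero _)))) hz'
        rw [e0, e1]
        have hemp : tailPP (PartialPlay.snoc (i := (0 : Fin (n+2)))
            (fun _ hj => absurd hj (Nat.not_lt_zero _))
            (σ 0 (fun _ hj => absurd hj (Nat.not_lt_zero _))))
            = (fun _ hj => absurd hj (Nat.not_lt_zero _)) := by
          funext j hj
          exact absurd hj (Nat.not_lt_zero _)
        congr 1
        exact hBplay.trans (congrArg (stratExt σB 0) hemp).symm

end Forward
section Backward
open Classical
variable {R : Type u} [SemilatticeSup R]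

theorem bwd_pure {n : ℕ} {X : Fin (n+1) → Type u} (ε : ∀ j, Sel R (X j))
    (i : Fin (n+1)) (hi : (i:ℕ) < n) {B : Type u} (c : X i ≃ B)
    (I : B → Finset (B → R)) (hI : ∀ b, (I b).Nonempty)
    (e : X (Fin.last n) ≃ Σ b : B, {P : B → R // P ∈ I b})
    (hδ : ∀ (k : X (Fin.last n) → R) y, y ∈ (ε (Fin.last n)).fn k)
    (H : ∀ (q : (∀ j, X j) → R) z, z ∈ (bigProd ε).fn q → IsSigmaPlay q ε z)
    (x : X i)
    (hx : x ∈ (ε i).fn (fun x' => (I (c x')).sup' (hI _) (fun P => P (c x')))) :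
    ∃ p : X i → X i → R, (∀ x', ∃ P ∈ I (c x'), p x' = fun x'' => P (c x'')) ∧
      x ∈ (ε i).fn (fun x' => p x' x') := by
  classical
  set f : X i → X (Fin.last n) → R := fun x'' y' =>
    if (e y').1 = c x'' then (e y').2.val (c x'') else ((hI (c x'')).choose) (c x'')
    with hf
  set C : X i → R := fun x' => (I (c x')).sup' (hI _) (fun P => P (c x')) with hCdef
  have hCsup : ∀ (x' : X i) (s : Finset (X (Fin.last n))) (hs : s.Nonempty),
      (∀ y, y ∈ s) → s.sup' hs (f x') = C x' := by
    intro x' s hs hall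
    apply le_antisymm
    · apply Finset.sup'_le
      intro y' _
      rw [hf]
      beta_reduce
      rw [hCdef]
      beta_reduce
      by_cases h : (e y').1 = c x'
      · rw [if_pos h]
        have hP : ((e y').2 : {P : B → R // P ∈ I (e y').1}).val ∈ I (c x') := by
          rw [← h]; exact (e y').2.prop
        exact Finset.le_sup' (fun P => P (c x')) hP
      · rw [if_neg h]
        exact Finset.le_sup' (fun P => P (c x')) ((hI (c x')).choose_spec)
    · apply Finset.sup'_le
      intro P hP
      have hy : e (e.symm ⟨c x', ⟨P, hP⟩⟩) = ⟨c x', ⟨P, hP⟩⟩ := e.apply_symm_apply _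
      have hfv : f x' (e.symm ⟨c x', ⟨P, hP⟩⟩) = P (c x') := by
        rw [hf]
        beta_reduce
        rw [hy]
        exact if_pos rfl
      rw [← hfv]
      exact Finset.le_sup' (f x') (hall _)
  obtain ⟨z, hz, hzi⟩ := exists_bigProd_at n X ε i hi f
    (fun zz => f (zz i) (zz (Fin.last n))) (fun _ => rfl) hδ C hCsup x hx
  obtain ⟨σ, hσ, hzplay⟩ := H (fun zz => f (zz i) (zz (Fin.last n))) z hz
  have hpre : z i = σ i (fun j' hj' => z j') := by
    rw [hzplay]
    exact stratExt_apply σ 0 (fun _ hj => absurd hj (Nat.not_lt_zero _)) i (Nat.zero_le _)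
  obtain ⟨σ', hσ', hmem⟩ := sigmaG_forward (fun zz => f (zz i) (zz (Fin.last n))) ε
    (hσ i) (fun j' hj' => z j')
  set w : X i → X (Fin.last n) := fun y => stratExt σ' ((i:ℕ)+1)
    (PartialPlay.snoc (fun j' hj' => z j') y) (Fin.last n) with hw
  have hctx : (fun y => (fun zz => f (zz i) (zz (Fin.last n)))
      (stratExt σ' ((i:ℕ)+1) (PartialPlay.snoc (fun j' hj' => z j') y)))
      = fun y => f y (w y) := by
    funext y
    show f (stratExt σ' ((i:ℕ)+1) (PartialPlay.snoc (fun j' hj' => z j') y) i)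
        (stratExt σ' ((i:ℕ)+1) (PartialPlay.snoc (fun j' hj' => z j') y) (Fin.last n))
      = f y (w y)
    congr 1
    exact (stratExt_lt σ' ((i:ℕ)+1) _ i (Nat.lt_succ_self _)).trans
      (snoc_self (fun j' hj' => z j') y _)
  rw [hctx] at hmem
  set p : X i → X i → R := fun x' x'' =>
    if (e (w x')).1 = c x' then ((e (w x')).2 : {P : B → R // P ∈ I (e (w x')).1}).val (c x'')
    else ((hI (c x')).choose) (c x'') with hp
  refine ⟨p, ?_, ?_⟩
  · intro x'
    by_cases h : (e (w x')).1 = c x'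
    · refine ⟨(e (w x')).2.val, by rw [← h]; exact (e (w x')).2.prop, ?_⟩
      funext x''
      rw [hp]
      beta_reduce
      rw [if_pos h]
    · refine ⟨(hI (c x')).choose, (hI (c x')).choose_spec, ?_⟩
      funext x''
      rw [hp]
      beta_reduce
      rw [if_neg h]
  · have hx_eq : x = σ i (fun j' hj' => z j') := by rw [← hpre, hzi]
    have hpeq : (fun x' => p x' x') = fun y => f y (w y) := by
      funext x'
      rw [hp, hf]
    rw [hpeq, hx_eq]
    exact hmem

end Backward
theorem witnessing_iff_bigProd_subset_sigmaPlays {R : Type u} [SemilatticeSup R]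
    [Nontrivial R] {m : ℕ} {X : Fin m → Type u}
    [∀ i, Fintype (X i)] [∀ i, Nonempty (X i)]
    (ε : ∀ i, Sel R (X i)) :
    (∀ i, Witnessing (ε i)) ↔
      ∀ (Y : Type u), Fintype Y → Nonempty Y →
        ∀ (δ : Sel R Y) (q : (∀ i, snocTypes X Y i) → R)
          (x : ∀ i, snocTypes X Y i),
          x ∈ (bigProd (snocSel ε δ)).fn q → IsSigmaPlay q (snocSel ε δ) x := by
  constructor
  · intro h Y ftY neY δ q x hx
    apply bigProd_subset_sigmaPlays m (snocTypes X Y) ?_ (snocSel ε δ) ?_ q x hx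
    · intro j
      induction j using Fin.lastCases with
      | last =>
          show Nonempty (Fin.snoc (α := fun _ => Type u) X Y (Fin.last m))
          rw [Fin.snoc_last]
          exact neY
      | cast j =>
          show Nonempty (Fin.snoc (α := fun _ => Type u) X Y (Fin.castSucc j))
          rw [Fin.snoc_castSucc]
          infer_instance
    · intro j hj
      obtain ⟨j₀, rfl⟩ : ∃ j₀ : Fin m, Fin.castSucc j₀ = j := ⟨⟨(j:ℕ), hj⟩, Fin.ext rfl⟩
      have hA : X j₀ = snocTypes X Y (Fin.castSucc j₀) :=
        (Fin.snoc_castSucc (α := fun _ => Type u) Y X j₀).symm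
      have hsel : (snocSel ε δ) (Fin.castSucc j₀)
          = cast (by simp [snocTypes]) (ε j₀) := by
        unfold snocSel; exact Fin.lastCases_castSucc j₀
      rw [hsel]
      exact (witnessing_cast hA _ (ε j₀)).mpr (h j₀)
  · intro H i
    intro I hI x hx
    classical
    set Y : Type u := Σ b : X i, {P : X i → R // P ∈ I b} with hY
    haveI neY : Nonempty Y := ⟨⟨Classical.arbitrary (X i), ⟨(hI _).choose, (hI _).choose_spec⟩⟩⟩
    haveI ftY : Fintype Y := by infer_instance
    set δ : Sel R Y := ⟨fun _ => Finset.univ, fun _ => Finset.univ_nonempty⟩ with hδdef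
    have hlast : snocTypes X Y (Fin.last m) = Y :=
      Fin.snoc_last (α := fun _ => Type u) Y X
    have hcst : snocTypes X Y (Fin.castSucc i) = X i :=
      Fin.snoc_castSucc (α := fun _ => Type u) Y X i
    have hsel : (snocSel ε δ) (Fin.castSucc i)
        = cast (by simp [snocTypes]) (ε i) := by
      unfold snocSel; exact Fin.lastCases_castSucc i
    have hsel' : (snocSel ε δ) (Fin.last m)
        = cast (by simp [snocTypes]) δ := by
      unfold snocSel; exact Fin.lastCases_last
    have hδ : ∀ (k : snocTypes X Y (Fin.last m) → R) y,
        y ∈ ((snocSel ε δ) (Fin.last m)).fn k := by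
      intro k y
      rw [hsel', sel_cast_mem hlast.symm _ δ k y]
      exact Finset.mem_univ _
    have H' : ∀ (q' : (∀ j, snocTypes X Y j) → R) z,
        z ∈ (bigProd (snocSel ε δ)).fn q' → IsSigmaPlay q' (snocSel ε δ) z :=
      H Y ftY neY δ
    have hi' : ((Fin.castSucc i : Fin (m+1)):ℕ) < m := i.isLt
    have hcsym : ∀ a : X i, (Equiv.cast hcst).symm a = cast hcst.symm a := by
      intro a; rfl
    have hccs : ∀ a : X i, (Equiv.cast hcst) ((Equiv.cast hcst).symm a) = a :=
      fun a => (Equiv.cast hcst).apply_symm_apply a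
    have hx' : (Equiv.cast hcst).symm x ∈ ((snocSel ε δ) (Fin.castSucc i)).fn
        (fun a => (I ((Equiv.cast hcst) a)).sup' (hI _) (fun P => P ((Equiv.cast hcst) a))) := by
      rw [hsel, sel_cast_mem hcst.symm _ (ε i) _ ((Equiv.cast hcst).symm x)]
      have h1 : cast hcst.symm.symm ((Equiv.cast hcst).symm x) = x := by
        rw [hcsym]
        simp [cast_cast]
      have h2 : (fun x' : X i => (fun a => (I ((Equiv.cast hcst) a)).sup' (hI _)
            (fun P => P ((Equiv.cast hcst) a))) (cast hcst.symm x'))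
          = fun x' : X i => (I x').sup' (hI _) (fun P => P x') := by
        funext x'
        beta_reduce
        have h3 : (Equiv.cast hcst) (cast hcst.symm x') = x' := by
          rw [Equiv.cast_apply]; simp [cast_cast]
        rw [h3]
      rw [h1, h2]
      exact hx
    obtain ⟨p', hp', hmem'⟩ := bwd_pure (snocSel ε δ) (Fin.castSucc i) hi'
      (Equiv.cast hcst) I hI (Equiv.cast hlast) hδ H' ((Equiv.cast hcst).symm x) hx'
    refine ⟨fun x' x'' => p' ((Equiv.cast hcst).symm x') ((Equiv.cast hcst).symm x''), ?_, ?_⟩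
    · intro x'
      beta_reduce
      obtain ⟨P, hP, hPeq⟩ := hp' ((Equiv.cast hcst).symm x')
      have heq : (fun x'' => p' ((Equiv.cast hcst).symm x') ((Equiv.cast hcst).symm x'')) = P := by
        funext x''
        rw [hPeq]
        show P ((Equiv.cast hcst) ((Equiv.cast hcst).symm x'')) = P x''
        rw [hccs]
      rw [heq]
      rw [hccs] at hP
      exact hP
    · rw [hsel, sel_cast_mem hcst.symm _ (ε i) _ ((Equiv.cast hcst).symm x)] at hmem'
      have h1 : cast hcst.symm.symm ((Equiv.cast hcst).symm x) = x := by
        rw [hcsym]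
        simp [cast_cast]
      have h2 : (fun x' : X i => (fun a => p' a a) (cast hcst.symm x'))
          = fun x' : X i => p' ((Equiv.cast hcst).symm x') ((Equiv.cast hcst).symm x') := by
        funext x'
        beta_reduce
        rw [hcsym]
      rw [h1, h2] at hmem'
      exact hmem'
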